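/- Let k, n be nonnegative integers with k ≤ n and let 0 < p < 1. Then k + 1 - B_{n,k}(p)/b_{n,k}(p) ≤ μ_{n,k}(p) ≤ p·n, where the lower bound is attained if and only if k = 0 and the upper bound is attained if and only if k = n. -/

import Mathlib

open Real

/-- Binomial probability `b_{n,k}(p)`. -/
noncomputable def b (n k : ℕ) (p : ℝ) : ℝ :=
  (n.choose k : ℝ) * p ^ k * (1 - p) ^ (n - k)

/-- Lower tail probability `B_{n,k}(p)`. -/
noncomputable def B (n k : ℕ) (p : ℝ) : ℝ :=
  ∑ j ∈ Finset.range (k + 1), (n.choose j : ℝ) * p ^ j * (1 - p) ^ (n - j)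

/-- Partial mean `μ_{n,k}(p) = ∑_{j=0}^k j b_{n,j}(p) / B_{n,k}(p)`. -/
noncomputable def mu (n k : ℕ) (p : ℝ) : ℝ :=
  ∑ j ∈ Finset.range (k + 1), (j : ℝ) * b n j p / B n k p

lemma B_def (n k : ℕ) (p : ℝ) : B n k p = ∑ j ∈ Finset.range (k + 1), b n j p := rfl

lemma b_pos {n k : ℕ} (hk : k ≤ n) {p : ℝ} (hp0 : 0 < p) (hp1 : p < 1) : 0 < b n k p := by
  have h := Nat.choose_pos hk
  have : (0:ℝ) < 1 - p := by linarith
  unfold b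
  positivity

lemma B_pos {n k : ℕ} (hk : k ≤ n) {p : ℝ} (hp0 : 0 < p) (hp1 : p < 1) : 0 < B n k p := by
  rw [B_def]
  apply Finset.sum_pos
  · intro j hj
    exact b_pos (le_trans (Nat.lt_succ_iff.mp (Finset.mem_range.mp hj)) hk) hp0 hp1
  · exact ⟨0, Finset.mem_range.mpr (Nat.succ_pos k)⟩

lemma b_step {n m : ℕ} (hm : m < n) (p : ℝ) :
    ((m:ℝ)+1) * (1-p) * b n (m+1) p = ((n:ℝ) - m) * p * b n m p := by
  have h2 : ((n.choose (m+1)) : ℝ) * ((m:ℝ)+1) = (n.choose m : ℝ) * ((n:ℝ) - m) := by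
    have := Nat.choose_succ_right_eq n m
    have h3 : ((n - m : ℕ) : ℝ) = (n:ℝ) - m := by
      rw [Nat.cast_sub hm.le]
    calc ((n.choose (m+1)) : ℝ) * ((m:ℝ)+1) = ((n.choose (m+1) * (m+1) : ℕ) : ℝ) := by push_cast; ring
    _ = ((n.choose m * (n - m) : ℕ) : ℝ) := by rw [this]
    _ = (n.choose m : ℝ) * ((n:ℝ) - m) := by push_cast [Nat.cast_sub hm.le]; ring
  have h1 : n - m = (n - (m+1)) + 1 := by omega
  unfold b
  rw [h1, pow_succ]
  linear_combination (p ^ (m+1) * (1-p) ^ (n - (m+1)) * (1-p)) * h2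

lemma b_logconcave {n i j : ℕ} (hj : j ≤ i) (hi : i < n) {p : ℝ} (hp0 : 0 < p) (hp1 : p < 1) :
    b n (i+1) p * b n j p ≤ b n (j+1) p * b n i p := by
  have hq : (0:ℝ) < 1 - p := by linarith
  have hbi := b_pos (le_of_lt hi) hp0 hp1
  have hbj := b_pos (le_trans hj (le_of_lt hi)) hp0 hp1
  have hbi1 := b_pos (Nat.succ_le_of_lt hi) hp0 hp1
  have hbj1 := b_pos (Nat.succ_le_of_lt (lt_of_le_of_lt hj hi)) hp0 hp1
  have si := b_step hi p
  have sj := b_step (lt_of_le_of_lt hj hi) p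
  have hin : (i:ℝ) ≤ n := by exact_mod_cast hi.le
  have hji : (j:ℝ) ≤ i := by exact_mod_cast hj
  have key : ((n:ℝ)-i)*((j:ℝ)+1) ≤ ((n:ℝ)-j)*((i:ℝ)+1) := by nlinarith
  have hpos : (0:ℝ) < ((i:ℝ)+1) * (1-p) * (((j:ℝ)+1) * (1-p)) := by positivity
  rw [← mul_le_mul_iff_right₀ hpos]
  have key2 := mul_le_mul_of_nonneg_right key
    (le_of_lt (by positivity : (0:ℝ) < p * (1-p) * (b n i p * b n j p)))
  calc ((i:ℝ)+1) * (1-p) * (((j:ℝ)+1) * (1-p)) * (b n (i+1) p * b n j p)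
      = (((i:ℝ)+1) * (1-p) * b n (i+1) p) * (((j:ℝ)+1) * (1-p) * b n j p) := by ring
    _ = (((n:ℝ)-i) * p * b n i p) * (((j:ℝ)+1) * (1-p) * b n j p) := by rw [si]
    _ = ((n:ℝ)-i)*((j:ℝ)+1) * (p * (1-p) * (b n i p * b n j p)) := by ring
    _ ≤ ((n:ℝ)-j)*((i:ℝ)+1) * (p * (1-p) * (b n i p * b n j p)) := key2
    _ = (((n:ℝ)-j) * p * b n j p) * (((i:ℝ)+1) * (1-p) * b n i p) := by ring
    _ = (((j:ℝ)+1) * (1-p) * b n (j+1) p) * (((i:ℝ)+1) * (1-p) * b n i p) := by rw [sj]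
    _ = ((i:ℝ)+1) * (1-p) * (((j:ℝ)+1) * (1-p)) * (b n (j+1) p * b n i p) := by ring

lemma B_succ (n k : ℕ) (p : ℝ) : B n (k+1) p = B n k p + b n (k+1) p := by
  rw [B_def, B_def, Finset.sum_range_succ]

lemma r_step {n i : ℕ} (hi : i < n) {p : ℝ} (hp0 : 0 < p) (hp1 : p < 1) :
    B n i p * b n (i+1) p + b n 0 p * b n i p ≤ B n (i+1) p * b n i p := by
  have h1 : B n (i+1) p * b n i p
      = (∑ j ∈ Finset.range (i+1), b n (j+1) p * b n i p) + b n 0 p * b n i p := by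
    rw [B_def, Finset.sum_range_succ', add_mul, Finset.sum_mul]
  rw [h1]
  have h2 : B n i p * b n (i+1) p = ∑ j ∈ Finset.range (i+1), b n (i+1) p * b n j p := by
    rw [B_def, Finset.sum_mul]
    exact Finset.sum_congr rfl fun j _ => mul_comm _ _
  rw [h2]
  apply add_le_add_left
  apply Finset.sum_le_sum
  intro j hj
  exact b_logconcave (Nat.lt_succ_iff.mp (Finset.mem_range.mp hj)) hi hp0 hp1

lemma r_lt {n i : ℕ} (hi : i < n) {p : ℝ} (hp0 : 0 < p) (hp1 : p < 1) :
    B n i p / b n i p < B n (i+1) p / b n (i+1) p := by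
  have hbi := b_pos (le_of_lt hi) hp0 hp1
  have hbi1 := b_pos (Nat.succ_le_of_lt hi) hp0 hp1
  have hb0 := b_pos (Nat.zero_le n) hp0 hp1
  rw [div_lt_div_iff₀ hbi hbi1]
  have := r_step hi hp0 hp1
  nlinarith

lemma r_mono {n i k : ℕ} (hik : i ≤ k) (hk : k ≤ n) {p : ℝ} (hp0 : 0 < p) (hp1 : p < 1) :
    B n i p / b n i p ≤ B n k p / b n k p := by
  induction k, hik using Nat.le_induction with
  | base => exact le_refl _
  | succ m him ih =>
    have hm : m < n := by omega
    exact le_trans (ih (by omega)) (r_lt hm hp0 hp1).le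

lemma r_strict {n i k : ℕ} (hik : i < k) (hk : k ≤ n) {p : ℝ} (hp0 : 0 < p) (hp1 : p < 1) :
    B n i p / b n i p < B n k p / b n k p := by
  have hi : i < n := lt_of_lt_of_le hik hk
  exact lt_of_lt_of_le (r_lt hi hp0 hp1) (r_mono (Nat.succ_le_of_lt hik) hk hp0 hp1)

lemma cross {n i k : ℕ} (hik : i ≤ k) (hk : k ≤ n) {p : ℝ} (hp0 : 0 < p) (hp1 : p < 1) :
    B n i p * b n k p ≤ B n k p * b n i p := by
  have hbi := b_pos (le_trans hik hk) hp0 hp1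
  have hbk := b_pos hk hp0 hp1
  exact (div_le_div_iff₀ hbi hbk).mp (r_mono hik hk hp0 hp1)

lemma cross_strict {n i k : ℕ} (hik : i < k) (hk : k ≤ n) {p : ℝ} (hp0 : 0 < p) (hp1 : p < 1) :
    B n i p * b n k p < B n k p * b n i p := by
  have hbi := b_pos (le_trans hik.le hk) hp0 hp1
  have hbk := b_pos hk hp0 hp1
  exact (div_lt_div_iff₀ hbi hbk).mp (r_strict hik hk hp0 hp1)

/-- `∑_{i=0}^k B_i = (k+1) B_k - ∑_{j=0}^k j b_j`. -/
lemma sumB (n k : ℕ) (p : ℝ) :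
    ∑ i ∈ Finset.range (k+1), B n i p
      = ((k:ℝ)+1) * B n k p - ∑ j ∈ Finset.range (k+1), (j:ℝ) * b n j p := by
  induction k with
  | zero => simp [B_def]
  | succ m ih =>
    rw [Finset.sum_range_succ, ih, Finset.sum_range_succ (fun j => (j:ℝ) * b n j p) (m+1),
      B_succ]
    push_cast
    ring

/-- Key inequality: `b_k · ∑_{i≤k} B_i ≤ B_k ^ 2`. -/
lemma keyA {n k : ℕ} (hk : k ≤ n) {p : ℝ} (hp0 : 0 < p) (hp1 : p < 1) :
    b n k p * ∑ i ∈ Finset.range (k+1), B n i p ≤ B n k p ^ 2 := by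
  have h1 : b n k p * ∑ i ∈ Finset.range (k+1), B n i p
      = ∑ i ∈ Finset.range (k+1), B n i p * b n k p := by
    rw [Finset.mul_sum]; exact Finset.sum_congr rfl fun i _ => mul_comm _ _
  have h2 : B n k p ^ 2 = ∑ i ∈ Finset.range (k+1), B n k p * b n i p := by
    rw [← Finset.mul_sum, ← B_def]; ring
  rw [h1, h2]
  apply Finset.sum_le_sum
  intro i hi
  exact cross (Nat.lt_succ_iff.mp (Finset.mem_range.mp hi)) hk hp0 hp1

lemma keyA_strict {n k : ℕ} (hk : k ≤ n) (hk1 : 1 ≤ k) {p : ℝ} (hp0 : 0 < p) (hp1 : p < 1) :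
    b n k p * ∑ i ∈ Finset.range (k+1), B n i p < B n k p ^ 2 := by
  have h1 : b n k p * ∑ i ∈ Finset.range (k+1), B n i p
      = ∑ i ∈ Finset.range (k+1), B n i p * b n k p := by
    rw [Finset.mul_sum]; exact Finset.sum_congr rfl fun i _ => mul_comm _ _
  have h2 : B n k p ^ 2 = ∑ i ∈ Finset.range (k+1), B n k p * b n i p := by
    rw [← Finset.mul_sum, ← B_def]; ring
  rw [h1, h2]
  apply Finset.sum_lt_sum
  · intro i hi
    exact cross (Nat.lt_succ_iff.mp (Finset.mem_range.mp hi)) hk hp0 hp1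
  · exact ⟨0, Finset.mem_range.mpr (by omega), cross_strict hk1 hk hp0 hp1⟩

/-- `B_{n,n}(p) = 1`. -/
lemma B_nn (n : ℕ) (p : ℝ) : B n n p = 1 := by
  rw [B_def]
  have h := add_pow p (1-p) n
  have h1 : p + (1-p) = 1 := by ring
  rw [h1, one_pow] at h
  rw [h]
  exact Finset.sum_congr rfl fun j _ => by unfold b; ring

/-- mean of binomial: `∑ j b_{n,j} = p n`. -/
lemma b_mean (n : ℕ) (p : ℝ) :
    ∑ j ∈ Finset.range (n+1), (j:ℝ) * b n j p = p * n := by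
  cases n with
  | zero => simp
  | succ m =>
    rw [Finset.sum_range_succ']
    have hterm : ∀ i ∈ Finset.range (m+1),
        ((i+1 : ℕ):ℝ) * b (m+1) (i+1) p = ((m+1:ℕ):ℝ) * p * b m i p := by
      intro i hi
      have hc : (m+1) * (m.choose i) = (m+1).choose (i+1) * (i+1) :=
        Nat.add_one_mul_choose_eq m i
      have hc' : (((m+1).choose (i+1) : ℕ):ℝ) * ((i:ℝ)+1) = ((m:ℝ)+1) * (m.choose i : ℝ) := by
        calc (((m+1).choose (i+1) : ℕ):ℝ) * ((i:ℝ)+1)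
            = (((m+1).choose (i+1) * (i+1) : ℕ) : ℝ) := by push_cast; ring
          _ = (((m+1) * (m.choose i) : ℕ) : ℝ) := by rw [hc]
          _ = ((m:ℝ)+1) * (m.choose i : ℝ) := by push_cast; ring
      have he : (m+1) - (i+1) = m - i := by omega
      unfold b
      rw [he, pow_succ]
      push_cast
      linear_combination (p^i * p * (1-p)^(m-i)) * hc'
    rw [Finset.sum_congr rfl hterm]
    rw [← Finset.mul_sum, ← B_def, B_nn]
    push_cast
    ring

lemma T_full (n : ℕ) (p : ℝ) :
    ∑ j ∈ Finset.range (n+1), ((j:ℝ) - p * n) * b n j p = 0 := by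
  have h : ∀ j ∈ Finset.range (n+1),
      ((j:ℝ) - p * n) * b n j p = (j:ℝ) * b n j p - p * n * b n j p :=
    fun j _ => by ring
  rw [Finset.sum_congr rfl h, Finset.sum_sub_distrib, b_mean, ← Finset.mul_sum, ← B_def, B_nn]
  ring

/-- upper bound, strict when k < n -/
lemma T_neg {n k : ℕ} (hkn : k < n) {p : ℝ} (hp0 : 0 < p) (hp1 : p < 1) :
    ∑ j ∈ Finset.range (k+1), ((j:ℝ) - p * n) * b n j p < 0 := by
  rcases le_or_gt (p * n) ((k:ℝ) + 1) with hc | hc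
  · -- tail is positive
    have hsplit : ∑ j ∈ Finset.range (k+1), ((j:ℝ) - p * n) * b n j p
        + ∑ j ∈ Finset.Ico (k+1) (n+1), ((j:ℝ) - p * n) * b n j p = 0 := by
      rw [← T_full n p]
      simp only [Finset.range_eq_Ico]
      exact Finset.sum_Ico_consecutive _ (by omega) (by omega)
    have htail : 0 < ∑ j ∈ Finset.Ico (k+1) (n+1), ((j:ℝ) - p * n) * b n j p := by
      have := Finset.sum_lt_sum (s := Finset.Ico (k+1) (n+1))
        (f := fun _ => (0:ℝ)) (g := fun (j:ℕ) => ((j:ℝ) - p * n) * b n j p)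
        (by
          intro j hj
          obtain ⟨h1, h2⟩ := Finset.mem_Ico.mp hj
          have hjn : j ≤ n := by omega
          have hb := b_pos hjn hp0 hp1
          have : p * n ≤ (j:ℝ) := by
            have : ((k:ℝ)+1) ≤ (j:ℝ) := by exact_mod_cast h1
            linarith
          show (0:ℝ) ≤ ((j:ℝ) - p * n) * b n j p
          nlinarith)
        (by
          refine ⟨n, Finset.mem_Ico.mpr ⟨by omega, by omega⟩, ?_⟩
          have hb := b_pos (le_refl n) hp0 hp1
          have hn1 : (1:ℝ) ≤ (n:ℝ) := by exact_mod_cast Nat.one_le_iff_ne_zero.mpr (by omega)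
          have : p * n < (n:ℝ) := by nlinarith
          show (0:ℝ) < ((n:ℝ) - p * n) * b n n p
          nlinarith)
      simpa using this
    linarith
  · -- all terms negative
    have := Finset.sum_lt_sum_of_nonempty
      (s := Finset.range (k+1))
      (f := fun (j:ℕ) => ((j:ℝ) - p * n) * b n j p) (g := fun _ => (0:ℝ))
      ⟨0, Finset.mem_range.mpr (Nat.succ_pos k)⟩
      (by
        intro j hj
        have hjk : j ≤ k := Nat.lt_succ_iff.mp (Finset.mem_range.mp hj)
        have hjn : j ≤ n := le_trans hjk hkn.le
        have hb := b_pos hjn hp0 hp1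
        have hjr : (j:ℝ) ≤ (k:ℝ) := by exact_mod_cast hjk
        have : (j:ℝ) - p * n < 0 := by linarith
        show ((j:ℝ) - p * n) * b n j p < 0
        nlinarith)
    simpa using this


theorem partial_mean_bounds
    (k n : ℕ) (hkn : k ≤ n) (p : ℝ) (hp0 : 0 < p) (hp1 : p < 1) :
    ((k : ℝ) + 1 - B n k p / b n k p ≤ mu n k p ∧ mu n k p ≤ p * n) ∧
    ((k : ℝ) + 1 - B n k p / b n k p = mu n k p ↔ k = 0) ∧
    (mu n k p = p * n ↔ k = n) := by
  have hS : 0 < B n k p := B_pos hkn hp0 hp1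
  have hbk : 0 < b n k p := b_pos hkn hp0 hp1
  set M : ℝ := ∑ j ∈ Finset.range (k+1), (j:ℝ) * b n j p with hM
  have hmu : mu n k p = M / B n k p := by
    rw [mu, hM, Finset.sum_div]
  have hT : ∑ j ∈ Finset.range (k+1), ((j:ℝ) - p * n) * b n j p
      = M - p * n * B n k p := by
    rw [hM, B_def, Finset.mul_sum, ← Finset.sum_sub_distrib]
    exact Finset.sum_congr rfl fun j _ => by ring
  -- upper bound facts
  have hupper_le : M ≤ p * n * B n k p := by
    rcases eq_or_lt_of_le hkn with heq | hlt
    · subst heq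
      have := T_full k p
      rw [hT] at this
      linarith
    · have := T_neg hlt hp0 hp1
      rw [hT] at this
      linarith
  have hupper_strict : k < n → M < p * n * B n k p := by
    intro hlt
    have := T_neg hlt hp0 hp1
    rw [hT] at this
    linarith
  -- lower bound facts
  have hSB : ∑ i ∈ Finset.range (k+1), B n i p = ((k:ℝ)+1) * B n k p - M := sumB n k p
  have hSdiv : B n k p / b n k p * B n k p = B n k p ^ 2 / b n k p := by
    rw [div_mul_eq_mul_div, sq]
  have hlower_le : (k : ℝ) + 1 - B n k p / b n k p ≤ mu n k p := by
    rw [hmu]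
    apply (le_div_iff₀ hS).mpr
    have hkey := keyA hkn hp0 hp1
    rw [hSB] at hkey
    have h2 : ((k:ℝ)+1) * B n k p - M ≤ B n k p ^ 2 / b n k p :=
      (le_div_iff₀ hbk).mpr (by linarith)
    calc ((k:ℝ)+1 - B n k p / b n k p) * B n k p
        = ((k:ℝ)+1) * B n k p - B n k p / b n k p * B n k p := by ring
      _ = ((k:ℝ)+1) * B n k p - B n k p ^ 2 / b n k p := by rw [hSdiv]
      _ ≤ M := by linarith
  have hlower_strict : 1 ≤ k → (k : ℝ) + 1 - B n k p / b n k p < mu n k p := by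
    intro hk1
    rw [hmu]
    apply (lt_div_iff₀ hS).mpr
    have hkey := keyA_strict hkn hk1 hp0 hp1
    rw [hSB] at hkey
    have h2 : ((k:ℝ)+1) * B n k p - M < B n k p ^ 2 / b n k p :=
      (lt_div_iff₀ hbk).mpr (by linarith)
    calc ((k:ℝ)+1 - B n k p / b n k p) * B n k p
        = ((k:ℝ)+1) * B n k p - B n k p ^ 2 / b n k p := by rw [← hSdiv]; ring
      _ < M := by linarith
  have hmu_le : mu n k p ≤ p * n := by
    rw [hmu]
    apply (div_le_iff₀ hS).mpr
    linarith
  refine ⟨⟨hlower_le, hmu_le⟩, ⟨?_, ?_⟩, ?_, ?_⟩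
  · intro heq
    by_contra h0
    exact absurd heq (ne_of_lt (hlower_strict (Nat.one_le_iff_ne_zero.mpr h0)))
  · intro h0
    subst h0
    have hB0 : B n 0 p = b n 0 p := by rw [B_def, Finset.sum_range_one]
    rw [mu, Finset.sum_range_one, hB0, div_self (ne_of_gt hbk)]
    norm_num
  · intro heq
    by_contra h0
    have hlt : k < n := lt_of_le_of_ne hkn h0
    have := hupper_strict hlt
    rw [hmu] at heq
    have : M / B n k p < p * n := (div_lt_iff₀ hS).mpr (by linarith)
    exact absurd heq (ne_of_lt this)
  · intro h0
    subst h0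
    rw [hmu, B_nn, div_one, hM, b_mean]
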